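/- With n+1 ads per query structured as: one ad (p,b)=(0.5,2), n ads (1,1.9), and n ads (0,1.8), under threshold selection: (a) p̂ = 0.5 is a fixed point (only the first ad shows and its CTR is 0.5); (b) the expected value of showing only the first ad is 0; (c) any p̂ with 1/1.9 ≤ p̂ < 1/1.8 shows the first 1+n ads and yields value 0.9n, but the average CTR of shown ads is (0.5+n)/(n+1) ≠ p̂ for n ≥ 2, so no such p̂ is a fixed point; (d) any p̂ ≥ 1/1.8 shows all ads and yields value 0.9n − n < 0. Hence for n ≥ 2 every fixed point of the calibration operator has expected value 0 while the efficiency-maximizing choice has value 0.9n. -/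
import Mathlib


open Classical

/- Single query, single raw prediction, threshold selection (mechanism ALL).
Ads: one ad (p,b) = (0.5, 2); `n` ads (1, 1.9); `n` ads (0, 1.8).
An ad shows iff `b * phat ≥ 1`; showing ad (p,b) generates value `p*b - 1`. -/

/-- the (0.5,2) ad shows -/
def showsA (phat : ℝ) : Prop := 2 * phat ≥ 1
/-- the (1,1.9) ads show -/
def showsB (phat : ℝ) : Prop := 1.9 * phat ≥ 1
/-- the (0,1.8) ads show -/
def showsC (phat : ℝ) : Prop := 1.8 * phat ≥ 1

/-- average CTR of the shown ads -/
noncomputable def meanCTR (n : ℕ) (phat : ℝ) : ℝ :=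
  ((if showsA phat then (0.5 : ℝ) else 0) + (if showsB phat then (n : ℝ) * 1 else 0)
    + (if showsC phat then (n : ℝ) * 0 else 0)) /
  ((if showsA phat then (1 : ℝ) else 0) + (if showsB phat then (n : ℝ) else 0)
    + (if showsC phat then (n : ℝ) else 0))

/-- expected value generated by serving with prediction `phat` -/
noncomputable def EV (n : ℕ) (phat : ℝ) : ℝ :=
  (if showsA phat then (0.5 : ℝ) * 2 - 1 else 0)
    + (if showsB phat then (n : ℝ) * (1 * 1.9 - 1) else 0)
    + (if showsC phat then (n : ℝ) * (0 * 1.8 - 1) else 0)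

/-- `phat` is a fixed point of the calibration operator: some ad shows and the
average CTR of the shown ads equals `phat`. -/
noncomputable def isFixedPoint (n : ℕ) (phat : ℝ) : Prop :=
  (showsA phat ∨ showsB phat ∨ showsC phat) ∧ meanCTR n phat = phat

lemma sA_iff (p : ℝ) : showsA p ↔ 1 ≤ 2 * p := Iff.rfl
lemma sB_iff (p : ℝ) : showsB p ↔ 1 ≤ 1.9 * p := Iff.rfl
lemma sC_iff (p : ℝ) : showsC p ↔ 1 ≤ 1.8 * p := Iff.rfl

lemma part_b (phat : ℝ) (h1 : 1/1.9 ≤ phat) (h2 : phat < 1/1.8) :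
    (showsA phat ∧ showsB phat ∧ ¬ showsC phat) := by
  norm_num at h1 h2
  refine ⟨?_, ?_, ?_⟩
  · rw [sA_iff]; linarith
  · rw [sB_iff]; norm_num; linarith
  · rw [sC_iff]; norm_num; linarith

lemma part_c (phat : ℝ) (h1 : 1/1.8 ≤ phat) :
    (showsA phat ∧ showsB phat ∧ showsC phat) := by
  norm_num at h1
  refine ⟨?_, ?_, ?_⟩
  · rw [sA_iff]; linarith
  · rw [sB_iff]; norm_num; linarith
  · rw [sC_iff]; norm_num; linarith

lemma EV_ab (n : ℕ) (p : ℝ) (hA : showsA p) (hB : showsB p) (hC : ¬ showsC p) :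
    EV n p = 0.9 * n := by
  unfold EV; rw [if_pos hA, if_pos hB, if_neg hC]; ring_nf

lemma mean_ab (n : ℕ) (p : ℝ) (hA : showsA p) (hB : showsB p) (hC : ¬ showsC p) :
    meanCTR n p = (0.5 + n) / (n + 1) := by
  unfold meanCTR; rw [if_pos hA, if_pos hB, if_neg hC, if_pos hA, if_pos hB, if_neg hC]
  ring_nf

/-- (a) `phat = 0.5` is a fixed point; (b) its expected value is 0;
(c) any `phat ∈ [1/1.9, 1/1.8)` shows the first `1+n` ads with value `0.9 n` but is
not a fixed point (mean CTR `(0.5+n)/(n+1) ≠ phat`); (d) any `phat ≥ 1/1.8` shows all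
ads with value `0.9 n - n < 0`.  Hence for `n ≥ 2` every fixed point has expected
value `0` while the efficiency-maximizing choice attains value `0.9 n`. -/
theorem fixed_points_have_bad_efficiency (n : ℕ) (hn : 2 ≤ n) :
    (isFixedPoint n (1/2) ∧ EV n (1/2) = 0) ∧
    (∀ phat : ℝ, 1/1.9 ≤ phat → phat < 1/1.8 →
      (showsA phat ∧ showsB phat ∧ ¬ showsC phat) ∧
      EV n phat = 0.9 * n ∧
      meanCTR n phat = (0.5 + n) / (n + 1) ∧ meanCTR n phat ≠ phat) ∧
    (∀ phat : ℝ, 1/1.8 ≤ phat →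
      (showsA phat ∧ showsB phat ∧ showsC phat) ∧
      EV n phat = 0.9 * n - n ∧ EV n phat < 0) ∧
    (∀ phat : ℝ, isFixedPoint n phat → EV n phat = 0) ∧
    (∀ phat : ℝ, EV n phat ≤ 0.9 * n) ∧
    (∃ phat : ℝ, 0 ≤ phat ∧ phat ≤ 1 ∧ EV n phat = 0.9 * n) := by
  have hn' : (2:ℝ) ≤ (n:ℝ) := by exact_mod_cast hn
  have hA2 : showsA (1/2) := by rw [sA_iff]; norm_num
  have hB2 : ¬ showsB (1/2) := by rw [sB_iff]; norm_num
  have hC2 : ¬ showsC (1/2) := by rw [sC_iff]; norm_num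
  refine ⟨⟨⟨Or.inl hA2, ?_⟩, ?_⟩, ?_, ?_, ?_, ?_, ?_⟩
  · unfold meanCTR
    rw [if_pos hA2, if_neg hB2, if_neg hC2, if_pos hA2, if_neg hB2, if_neg hC2]
    norm_num
  · unfold EV; rw [if_pos hA2, if_neg hB2, if_neg hC2]; norm_num
  · intro phat h1 h2
    obtain ⟨hA, hB, hC⟩ := part_b phat h1 h2
    refine ⟨⟨hA, hB, hC⟩, EV_ab n phat hA hB hC, mean_ab n phat hA hB hC, ?_⟩
    rw [mean_ab n phat hA hB hC]
    norm_num at h2 ⊢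
    intro h
    rw [div_eq_iff (by positivity)] at h
    nlinarith
  · intro phat h1
    obtain ⟨hA, hB, hC⟩ := part_c phat h1
    refine ⟨⟨hA, hB, hC⟩, ?_, ?_⟩
    · unfold EV; rw [if_pos hA, if_pos hB, if_pos hC]; ring_nf
    · unfold EV; rw [if_pos hA, if_pos hB, if_pos hC]; nlinarith
  · rintro phat ⟨hshow, hmean⟩
    by_cases hB : showsB phat
    · exfalso
      have hB' : (1:ℝ) ≤ 1.9 * phat := hB
      have hA : showsA phat := by rw [sA_iff]; norm_num at hB'; linarith
      by_cases hC : showsC phat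
      · have hC' : (1:ℝ) ≤ 1.8 * phat := hC
        unfold meanCTR at hmean
        rw [if_pos hA, if_pos hB, if_pos hC, if_pos hA, if_pos hB, if_pos hC] at hmean
        have hd : (0:ℝ) < 1 + n + n := by positivity
        rw [div_eq_iff (ne_of_gt hd)] at hmean
        norm_num at hC'
        nlinarith
      · have hC' : ¬ ((1:ℝ) ≤ 1.8 * phat) := hC
        rw [mean_ab n phat hA hB hC] at hmean
        rw [div_eq_iff (by positivity : ((n:ℝ) + 1) ≠ 0)] at hmean
        push_neg at hC'
        norm_num at hC'
        nlinarith
    · have hC : ¬ showsC phat := by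
        intro hC
        have hC' : (1:ℝ) ≤ 1.8 * phat := hC
        exact hB (by rw [sB_iff]; norm_num at hC' ⊢; linarith)
      unfold EV; rw [if_neg hB, if_neg hC]
      split <;> norm_num
  · intro phat
    unfold EV
    have h1 : (if showsA phat then (0.5:ℝ) * 2 - 1 else 0) = 0 := by split <;> norm_num
    rw [h1]
    have h2 : (if showsB phat then (n:ℝ) * (1 * 1.9 - 1) else 0) ≤ 0.9 * n := by
      split <;> nlinarith
    have h3 : (if showsC phat then (n:ℝ) * (0 * 1.8 - 1) else 0) ≤ 0 := by
      split <;> nlinarith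
    linarith
  · refine ⟨1/1.9, by norm_num, by norm_num, ?_⟩
    obtain ⟨hA, hB, hC⟩ := part_b (1/1.9) (le_refl _) (by norm_num)
    exact EV_ab n _ hA hB hC
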